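/- If the multilinear extension F̃ satisfies sup_{ψ ∈ [0,1]^V} |F̃(ψ)| < 1/|V|, then the matrix A = I − Σ'(∇F̃(ψ)) · ∇²F̃(ψ) is invertible for every ψ ∈ [0,1]^V, since the Frobenius norm (hence operator norm) of Σ'(∇F̃(ψ)) · ∇²F̃(ψ) is strictly less than 1. -/
import Mathlib


open Real Finset

noncomputable def mlext {n : ℕ} (F : Finset (Fin n) → ℝ) (ψ : Fin n → ℝ) : ℝ :=
  ∑ S : Finset (Fin n), F S * ((∏ j ∈ S, ψ j) * ∏ j ∈ Sᶜ, (1 - ψ j))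

noncomputable def pd {n : ℕ} (i : Fin n) (f : (Fin n → ℝ) → ℝ) (ψ : Fin n → ℝ) : ℝ :=
  deriv (fun t => f (Function.update ψ i t)) (ψ i)

noncomputable def sigmoid (x : ℝ) : ℝ := (1 + Real.exp (-x))⁻¹

lemma mlext_update {n : ℕ} (F : Finset (Fin n) → ℝ) (i : Fin n) (ψ : Fin n → ℝ) (t : ℝ) :
    mlext F (Function.update ψ i t) =
      mlext F (Function.update ψ i 0) +
        t * (mlext F (Function.update ψ i 1) - mlext F (Function.update ψ i 0)) := by
  have key : ∀ (s : ℝ) (S : Finset (Fin n)),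
      (∏ j ∈ S, Function.update ψ i s j) * ∏ j ∈ Sᶜ, (1 - Function.update ψ i s j) =
      (if i ∈ S then s * ((∏ j ∈ S \ {i}, ψ j) * ∏ j ∈ Sᶜ, (1 - ψ j))
       else (1 - s) * ((∏ j ∈ S, ψ j) * ∏ j ∈ Sᶜ \ {i}, (1 - ψ j))) := by
    intro s S
    by_cases hi : i ∈ S
    · rw [if_pos hi, Finset.prod_update_of_mem hi]
      have h2 : ∏ j ∈ Sᶜ, (1 - Function.update ψ i s j) = ∏ j ∈ Sᶜ, (1 - ψ j) :=
        Finset.prod_congr rfl fun j hj => by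
          rw [Function.update_of_ne (by rintro rfl; exact (Finset.mem_compl.1 hj) hi)]
      rw [h2]; ring
    · rw [if_neg hi]
      have h1 : ∏ j ∈ S, Function.update ψ i s j = ∏ j ∈ S, ψ j :=
        Finset.prod_congr rfl fun j hj => Function.update_of_ne (by rintro rfl; exact hi hj) _ _
      have h2 : (fun j => 1 - Function.update ψ i s j) =
          Function.update (fun j => 1 - ψ j) i (1 - s) := by
        funext j
        by_cases hj : j = i
        · subst hj; simp
        · simp [Function.update_of_ne hj]
      have h3 : ∏ j ∈ Sᶜ, (1 - Function.update ψ i s j)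
          = (1 - s) * ∏ j ∈ Sᶜ \ {i}, (1 - ψ j) := by
        rw [h2]
        exact Finset.prod_update_of_mem (Finset.mem_compl.2 hi) _ _
      rw [h1, h3]; ring
  have h : ∀ S ∈ (Finset.univ : Finset (Finset (Fin n))),
      F S * ((∏ j ∈ S, Function.update ψ i t j) * ∏ j ∈ Sᶜ, (1 - Function.update ψ i t j)) =
      F S * ((∏ j ∈ S, Function.update ψ i 0 j) * ∏ j ∈ Sᶜ, (1 - Function.update ψ i 0 j)) +
      t * (F S * ((∏ j ∈ S, Function.update ψ i 1 j) * ∏ j ∈ Sᶜ, (1 - Function.update ψ i 1 j)) -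
        F S * ((∏ j ∈ S, Function.update ψ i 0 j) * ∏ j ∈ Sᶜ, (1 - Function.update ψ i 0 j))) := by
    intro S _
    rw [key t S, key 0 S, key 1 S]
    by_cases hi : i ∈ S <;> simp only [if_pos, if_neg, hi, if_true, if_false] <;> ring
  unfold mlext
  rw [Finset.sum_congr rfl h, Finset.sum_add_distrib, ← Finset.mul_sum, Finset.sum_sub_distrib]

lemma deriv_affine (a b x : ℝ) : deriv (fun t => a + t * b) x = b := by
  have : HasDerivAt (fun t : ℝ => a + t * b) b x := by
    simpa using ((hasDerivAt_id x).mul_const b).const_add a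
  exact this.deriv

lemma pd_mlext {n : ℕ} (F : Finset (Fin n) → ℝ) (i : Fin n) (ψ : Fin n → ℝ) :
    pd i (mlext F) ψ
      = mlext F (Function.update ψ i 1) - mlext F (Function.update ψ i 0) := by
  have hfun : (fun t => mlext F (Function.update ψ i t)) =
      fun t => mlext F (Function.update ψ i 0) +
        t * (mlext F (Function.update ψ i 1) - mlext F (Function.update ψ i 0)) :=
    funext (mlext_update F i ψ)
  show deriv (fun t => mlext F (Function.update ψ i t)) (ψ i) = _
  rw [hfun, deriv_affine]

lemma pd_pd {n : ℕ} (F : Finset (Fin n) → ℝ) (i j : Fin n) (ψ : Fin n → ℝ) :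
    pd j (fun φ => pd i (mlext F) φ) ψ =
      if j = i then 0 else
        (mlext F (Function.update (Function.update ψ i 1) j 1)
          - mlext F (Function.update (Function.update ψ i 1) j 0))
        - (mlext F (Function.update (Function.update ψ i 0) j 1)
          - mlext F (Function.update (Function.update ψ i 0) j 0)) := by
  have hrfl : pd j (fun φ => pd i (mlext F) φ) ψ
      = deriv (fun t => pd i (mlext F) (Function.update ψ j t)) (ψ j) := rfl
  have hfun : (fun t => pd i (mlext F) (Function.update ψ j t)) =
      fun t => mlext F (Function.update (Function.update ψ j t) i 1)
        - mlext F (Function.update (Function.update ψ j t) i 0) :=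
    funext fun t => pd_mlext F i _
  rw [hrfl, hfun]
  by_cases hji : j = i
  · subst hji
    have hconst : (fun t => mlext F (Function.update (Function.update ψ j t) j 1)
        - mlext F (Function.update (Function.update ψ j t) j 0)) =
        fun _ => mlext F (Function.update ψ j 1) - mlext F (Function.update ψ j 0) := by
      funext t; rw [Function.update_idem, Function.update_idem]
    rw [if_pos rfl, hconst, deriv_const]
  · rw [if_neg hji]
    have hcomm : ∀ (t c : ℝ), Function.update (Function.update ψ j t) i c =
        Function.update (Function.update ψ i c) j t := fun t c =>
      Function.update_comm hji t c ψ
    set a1 := mlext F (Function.update (Function.update ψ i 1) j 0) with ha1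
    set b1 := mlext F (Function.update (Function.update ψ i 1) j 1)
      - mlext F (Function.update (Function.update ψ i 1) j 0) with hb1
    set a0 := mlext F (Function.update (Function.update ψ i 0) j 0) with ha0
    set b0 := mlext F (Function.update (Function.update ψ i 0) j 1)
      - mlext F (Function.update (Function.update ψ i 0) j 0) with hb0
    have hfun2 : (fun t => mlext F (Function.update (Function.update ψ j t) i 1)
        - mlext F (Function.update (Function.update ψ j t) i 0)) =
        fun t => (a1 - a0) + t * (b1 - b0) := by
      funext t
      rw [hcomm t 1, hcomm t 0, mlext_update F j (Function.update ψ i 1) t,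
        mlext_update F j (Function.update ψ i 0) t, ha1, hb1, ha0, hb0]
      ring
    rw [hfun2, deriv_affine]

lemma mlext_abs_le {n : ℕ} (F : Finset (Fin n) → ℝ) (φ : Fin n → ℝ)
    (hφ : ∀ k, φ k ∈ Set.Icc (0:ℝ) 1) :
    |mlext F φ| ≤ ∑ S : Finset (Fin n), |F S| := by
  unfold mlext
  refine (Finset.abs_sum_le_sum_abs _ _).trans (Finset.sum_le_sum fun S _ => ?_)
  rw [abs_mul]
  have hp : ∀ (T : Finset (Fin n)) (g : Fin n → ℝ),
      (∀ j, 0 ≤ g j ∧ g j ≤ 1) → |∏ j ∈ T, g j| ≤ 1 := by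
    intro T g hg
    rw [abs_of_nonneg (Finset.prod_nonneg fun j _ => (hg j).1)]
    exact Finset.prod_le_one (fun j _ => (hg j).1) (fun j _ => (hg j).2)
  have h1 : |(∏ j ∈ S, φ j) * ∏ j ∈ Sᶜ, (1 - φ j)| ≤ 1 := by
    rw [abs_mul]
    have hA := hp S φ (fun j => ⟨(hφ j).1, (hφ j).2⟩)
    have hB := hp Sᶜ (fun j => 1 - φ j) (fun j => ⟨by show (0:ℝ) ≤ 1 - φ j; linarith [(hφ j).2], by show (1:ℝ) - φ j ≤ 1; linarith [(hφ j).1]⟩)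
    have hA0 : (0:ℝ) ≤ |∏ j ∈ S, φ j| := abs_nonneg _
    nlinarith [abs_nonneg (∏ j ∈ Sᶜ, (1 - φ j))]
  calc |F S| * |(∏ j ∈ S, φ j) * ∏ j ∈ Sᶜ, (1 - φ j)| ≤ |F S| * 1 :=
        mul_le_mul_of_nonneg_left h1 (abs_nonneg _)
    _ = |F S| := mul_one _

theorem implicit_matrix_invertible {n : ℕ} (hn : 1 ≤ n) (F : Finset (Fin n) → ℝ)
    (hsup : sSup ((fun φ => |mlext F φ|) '' {φ : Fin n → ℝ | ∀ k, φ k ∈ Set.Icc (0:ℝ) 1})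
      < 1 / n) :
    ∀ ψ : Fin n → ℝ, (∀ k, ψ k ∈ Set.Icc (0:ℝ) 1) →
      IsUnit ((1 : Matrix (Fin n) (Fin n) ℝ) -
        Matrix.of (fun i j =>
          Real.exp (-(pd i (mlext F) ψ)) *
            ((1 + Real.exp (-(pd i (mlext F) ψ))) ^ 2)⁻¹ *
            pd j (fun φ => pd i (mlext F) φ) ψ)) := by
  intro ψ hψ
  set c := sSup ((fun φ => |mlext F φ|) '' {φ : Fin n → ℝ | ∀ k, φ k ∈ Set.Icc (0:ℝ) 1}) with hc
  have hbdd : BddAbove ((fun φ => |mlext F φ|) '' {φ : Fin n → ℝ | ∀ k, φ k ∈ Set.Icc (0:ℝ) 1}) := by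
    refine ⟨∑ S : Finset (Fin n), |F S|, ?_⟩
    rintro x ⟨φ, hφ, rfl⟩
    exact mlext_abs_le F φ hφ
  have hle : ∀ φ : Fin n → ℝ, (∀ k, φ k ∈ Set.Icc (0:ℝ) 1) → |mlext F φ| ≤ c :=
    fun φ h => le_csSup hbdd ⟨φ, h, rfl⟩
  have hc0 : 0 ≤ c :=
    le_trans (abs_nonneg _) (hle (fun _ => 0) (fun k => ⟨le_refl 0, zero_le_one⟩))
  have hcube : ∀ (φ : Fin n → ℝ), (∀ k, φ k ∈ Set.Icc (0:ℝ) 1) →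
      ∀ (i : Fin n) (t : ℝ), t ∈ Set.Icc (0:ℝ) 1 →
      ∀ k, Function.update φ i t k ∈ Set.Icc (0:ℝ) 1 := by
    intro φ hφ i t ht k
    by_cases hk : k = i
    · subst hk; simpa using ht
    · rw [Function.update_of_ne hk]; exact hφ k
  have h01 : (0:ℝ) ∈ Set.Icc (0:ℝ) 1 := ⟨le_refl 0, zero_le_one⟩
  have h11 : (1:ℝ) ∈ Set.Icc (0:ℝ) 1 := ⟨zero_le_one, le_refl 1⟩
  -- bound on second partials
  have hpd2 : ∀ i j : Fin n, |pd j (fun φ => pd i (mlext F) φ) ψ| ≤ 4 * c := by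
    intro i j
    rw [pd_pd]
    by_cases hji : j = i
    · rw [if_pos hji]; simpa using by positivity
    · rw [if_neg hji]
      have h1 := hle _ (hcube _ (hcube ψ hψ i 1 h11) j 1 h11)
      have h2 := hle _ (hcube _ (hcube ψ hψ i 1 h11) j 0 h01)
      have h3 := hle _ (hcube _ (hcube ψ hψ i 0 h01) j 1 h11)
      have h4 := hle _ (hcube _ (hcube ψ hψ i 0 h01) j 0 h01)
      have e1 := abs_le.1 h1
      have e2 := abs_le.1 h2
      have e3 := abs_le.1 h3
      have e4 := abs_le.1 h4
      rw [abs_le]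
      constructor <;> [linarith [e1.1, e2.2, e3.2, e4.1]; linarith [e1.2, e2.1, e3.1, e4.2]]
  have hsig : ∀ x : ℝ, 0 ≤ Real.exp (-x) * ((1 + Real.exp (-x)) ^ 2)⁻¹ ∧
      Real.exp (-x) * ((1 + Real.exp (-x)) ^ 2)⁻¹ ≤ 1 / 4 := by
    intro x
    have hy : 0 < Real.exp (-x) := Real.exp_pos _
    set y := Real.exp (-x)
    have h2 : (0:ℝ) < (1 + y) ^ 2 := by positivity
    refine ⟨by positivity, ?_⟩
    rw [← div_eq_mul_inv, div_le_iff₀ h2]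
    nlinarith [sq_nonneg (1 - y)]
  set M : Matrix (Fin n) (Fin n) ℝ := Matrix.of (fun i j =>
      Real.exp (-(pd i (mlext F) ψ)) *
        ((1 + Real.exp (-(pd i (mlext F) ψ))) ^ 2)⁻¹ *
        pd j (fun φ => pd i (mlext F) φ) ψ) with hM
  have hMij : ∀ i j, |M i j| ≤ c := by
    intro i j
    have hs := hsig (pd i (mlext F) ψ)
    have hp := hpd2 i j
    have : |M i j| = (Real.exp (-(pd i (mlext F) ψ)) *
        ((1 + Real.exp (-(pd i (mlext F) ψ))) ^ 2)⁻¹) *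
        |pd j (fun φ => pd i (mlext F) φ) ψ| := by
      rw [hM]
      simp only [Matrix.of_apply]
      rw [abs_mul, abs_of_nonneg hs.1]
    rw [this]
    calc (Real.exp (-(pd i (mlext F) ψ)) *
        ((1 + Real.exp (-(pd i (mlext F) ψ))) ^ 2)⁻¹) *
        |pd j (fun φ => pd i (mlext F) φ) ψ| ≤ (1/4) * (4 * c) := by
          apply mul_le_mul hs.2 hp (abs_nonneg _) (by norm_num)
      _ = c := by ring
  -- show invertibility via nonvanishing determinant
  rw [Matrix.isUnit_iff_isUnit_det, isUnit_iff_ne_zero]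
  intro hdet
  obtain ⟨v, hv0, hv⟩ := (Matrix.exists_mulVec_eq_zero_iff).2 hdet
  have hvM : ∀ k, v k = ∑ j, M k j * v j := by
    intro k
    have h1 : ((1 : Matrix (Fin n) (Fin n) ℝ) - M).mulVec v = 0 := hv
    have h2 : ((1 : Matrix (Fin n) (Fin n) ℝ).mulVec v) - M.mulVec v = 0 := by
      rw [← Matrix.sub_mulVec]; exact h1
    have h3 : v - M.mulVec v = 0 := by rwa [Matrix.one_mulVec] at h2
    have h4 : v = M.mulVec v := by
      have := sub_eq_zero.1 h3
      exact this
    have : v k = (M.mulVec v) k := congrFun h4 k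
    rw [this]
    simp [Matrix.mulVec, dotProduct]
  have hne : (Finset.univ : Finset (Fin n)).Nonempty := by
    have : Nonempty (Fin n) := ⟨⟨0, hn⟩⟩
    exact Finset.univ_nonempty
  obtain ⟨k, -, hk⟩ := Finset.exists_max_image Finset.univ (fun j => |v j|) hne
  have hvk : 0 < |v k| := by
    rcases Function.ne_iff.1 hv0 with ⟨j, hj⟩
    exact lt_of_lt_of_le (abs_pos.2 hj) (hk j (Finset.mem_univ j))
  have hsum : |v k| ≤ (n : ℝ) * (c * |v k|) := by
    calc |v k| = |∑ j, M k j * v j| := by rw [hvM k]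
      _ ≤ ∑ j, |M k j * v j| := Finset.abs_sum_le_sum_abs _ _
      _ ≤ ∑ _j : Fin n, c * |v k| := by
          refine Finset.sum_le_sum fun j _ => ?_
          rw [abs_mul]
          exact mul_le_mul (hMij k j) (hk j (Finset.mem_univ j)) (abs_nonneg _) hc0
      _ = (n : ℝ) * (c * |v k|) := by
          rw [Finset.sum_const, Finset.card_univ, Fintype.card_fin, nsmul_eq_mul]
  have hn1 : (1:ℝ) ≤ (n:ℝ) := by exact_mod_cast hn
  have hnc : (n : ℝ) * c < 1 := by
    have hnpos : (0:ℝ) < n := by linarith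
    have : (n : ℝ) * c < (n : ℝ) * (1 / n) := by
      exact mul_lt_mul_of_pos_left hsup hnpos
    rwa [mul_one_div, div_self (ne_of_gt hnpos)] at this
  nlinarith [hsum, hvk, hnc, hc0]
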